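/- Sharp upper bound with one regressor: let X_o and Y be real square-integrable random variables with Var(X_o) > 0, observed only via marginals. Then the supremum over couplings (X̃,Ỹ) of the slope coefficient Cov(X̃,Ỹ)/Var(X̃) equals E[(F_{X_o}^{-1}(U) − E[X_o]) F_Y^{-1}(U)] / Var(X_o), where U ~ Uniform[0,1], and this supremum is attained. -/

import Mathlib

open MeasureTheory Set Filter ProbabilityTheory Topology

/-- Generalized inverse (quantile function) of the cdf of a measure `μ` on `ℝ`. -/
noncomputable def qf (μ : Measure ℝ) (t : ℝ) : ℝ :=
  sInf {x | t ≤ (μ (Set.Iic x)).toReal}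


variable (μ : Measure ℝ) [IsProbabilityMeasure μ]

lemma qf_eq (t : ℝ) : qf μ t = sInf {x | t ≤ cdf μ x} := by
  unfold qf; congr 1; ext x; simp [cdf_eq_real, measureReal_def]

lemma qf_set_nonempty {t : ℝ} (ht : t < 1) : {x | t ≤ cdf μ x}.Nonempty := by
  have := (tendsto_cdf_atTop μ).eventually (eventually_ge_nhds ht)
  obtain ⟨x, hx⟩ := this.exists
  exact ⟨x, hx⟩

lemma qf_set_bddBelow {t : ℝ} (ht : 0 < t) : BddBelow {x | t ≤ cdf μ x} := by
  have := (tendsto_cdf_atBot μ).eventually (eventually_lt_nhds ht)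
  obtain ⟨x, hx⟩ := this.exists
  refine ⟨x, fun y hy => ?_⟩
  by_contra h
  push_neg at h
  exact absurd (hy.trans ((monotone_cdf μ) h.le)) (not_le.2 hx)

lemma cdf_qf_ge {t : ℝ} (ht : 0 < t) (ht1 : t < 1) : t ≤ cdf μ (qf μ t) := by
  rw [qf_eq]
  set S := {x | t ≤ cdf μ x} with hS
  have hne := qf_set_nonempty μ ht1
  have hbd := qf_set_bddBelow μ ht
  have hcl : sInf S ∈ closure S := csInf_mem_closure hne hbd
  have hsub : S ⊆ Ici (sInf S) := fun y hy => csInf_le hbd hy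
  have hct : ContinuousWithinAt (cdf μ) S (sInf S) :=
    ((cdf μ).right_continuous (sInf S)).mono hsub
  have hne2 : (𝓝[S] (sInf S)).NeBot := mem_closure_iff_nhdsWithin_neBot.1 hcl
  exact ge_of_tendsto hct (eventually_nhdsWithin_of_forall (fun y hy => hy))

lemma qf_le_iff {t x : ℝ} (ht : 0 < t) (ht1 : t < 1) : qf μ t ≤ x ↔ t ≤ cdf μ x := by
  constructor
  · intro h
    exact (cdf_qf_ge μ ht ht1).trans ((monotone_cdf μ) h)
  · intro h
    rw [qf_eq]
    exact csInf_le (qf_set_bddBelow μ ht) h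

lemma qf_monoOn : MonotoneOn (qf μ) (Ioo 0 1) := by
  intro a ha b hb hab
  rw [qf_le_iff μ ha.1 ha.2]
  exact hab.trans (cdf_qf_ge μ hb.1 hb.2)

lemma qf_aemeasurable : AEMeasurable (qf μ) (volume.restrict (Ioo 0 1)) :=
  aemeasurable_restrict_of_monotoneOn measurableSet_Ioo (qf_monoOn μ)

lemma qf_map_eq : Measure.map (qf μ) (volume.restrict (Ioo 0 1)) = μ := by
  have hmeas : IsProbabilityMeasure (volume.restrict (Ioo (0:ℝ) 1)) := by
    constructor; simp
  refine MeasureTheory.Measure.ext_of_Iic _ _ (fun x => ?_)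
  rw [Measure.map_apply_of_aemeasurable (qf_aemeasurable μ) measurableSet_Iic]
  have hset : qf μ ⁻¹' (Iic x) ∩ Ioo 0 1 = Iic (cdf μ x) ∩ Ioo 0 1 := by
    ext t
    simp only [mem_inter_iff, mem_preimage, mem_Iic, mem_Ioo, and_congr_left_iff]
    intro ht
    exact qf_le_iff μ ht.1 ht.2
  have h0 : (0:ℝ) ≤ cdf μ x := cdf_nonneg μ x
  have h1 : cdf μ x ≤ 1 := cdf_le_one μ x
  have key : volume (qf μ ⁻¹' (Iic x) ∩ Ioo 0 1) = ENNReal.ofReal (cdf μ x) := by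
    rw [hset]
    rcases eq_or_lt_of_le h1 with heq | hlt
    · have : Iic (cdf μ x) ∩ Ioo (0:ℝ) 1 = Ioo 0 1 := by
        rw [inter_eq_right]
        intro t ht
        exact le_of_lt (heq ▸ ht.2)
      rw [this, Real.volume_Ioo, heq]
      norm_num
    · have : Iic (cdf μ x) ∩ Ioo (0:ℝ) 1 = Ioc 0 (cdf μ x) := by
        ext t
        simp only [mem_inter_iff, mem_Iic, mem_Ioo, mem_Ioc]
        constructor
        · rintro ⟨h, h2, _⟩; exact ⟨h2, h⟩
        · rintro ⟨h2, h⟩; exact ⟨h, h2, h.trans_lt hlt⟩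
      rw [this, Real.volume_Ioc, sub_zero]
  calc volume.restrict (Ioo 0 1) (qf μ ⁻¹' Iic x)
      = volume (qf μ ⁻¹' (Iic x) ∩ Ioo 0 1) := by
        rw [Measure.restrict_apply₀' measurableSet_Ioo.nullMeasurableSet]
    _ = ENNReal.ofReal (cdf μ x) := key
    _ = μ (Iic x) := ofReal_cdf μ x

noncomputable def hh (s x : ℝ) : ℝ := (if s < x then 1 else 0) - (if s < 0 then 1 else 0)

lemma hh_eq (x : ℝ) : (fun s => hh s x) =
    Set.indicator (Ico (min x 0) (max x 0)) (fun _ => if 0 ≤ x then (1:ℝ) else -1) := by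
  funext s
  unfold hh
  rcases le_or_gt 0 x with hx | hx
  · simp only [hx, if_true, min_eq_right hx, max_eq_left hx]
    by_cases h1 : s < x <;> by_cases h2 : s < 0 <;>
      simp [Set.indicator_apply, mem_Ico, h1, h2, not_lt.mp, le_of_lt] <;>
      first
        | (intro h; linarith)
        | (rw [if_pos (not_lt.mp h2)])
        | (rw [if_neg (fun h => absurd h1 (not_lt.mpr (le_trans (not_lt.mp h) hx).le))]; try linarith)
        | linarith
  · simp only [not_le.2 hx, if_false, min_eq_left hx.le, max_eq_right hx.le]
    by_cases h1 : s < x <;> by_cases h2 : s < 0 <;>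
      simp [Set.indicator_apply, mem_Ico, h1, h2, not_lt.mp, le_of_lt] <;>
      first
        | (intro h; linarith)
        | (rw [if_pos (not_lt.mp h1)])
        | (rw [if_neg (by intro h; linarith [not_lt.mp h2])])
        | linarith

lemma hh_integrable (x : ℝ) : Integrable (fun s => hh s x) volume := by
  rw [hh_eq]
  rw [integrable_indicator_iff measurableSet_Ico]
  apply (integrableOn_const_iff (C := if 0 ≤ x then (1:ℝ) else -1)).mpr
  right
  exact measure_Ico_lt_top

lemma hh_integral (x : ℝ) : ∫ s, hh s x = x := by
  rw [hh_eq, integral_indicator measurableSet_Ico, setIntegral_const, measureReal_def, Real.volume_Ico, smul_eq_mul]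
  rcases le_or_gt 0 x with hx | hx
  · rw [if_pos hx, mul_one, min_eq_right hx, max_eq_left hx, sub_zero,
      ENNReal.toReal_ofReal hx]
  · rw [if_neg (not_le.2 hx), min_eq_left hx.le, max_eq_right hx.le, zero_sub,
      ENNReal.toReal_ofReal (by linarith), mul_neg_one, neg_neg]

lemma hh_norm_integral (x : ℝ) : ∫ s, ‖hh s x‖ = |x| := by
  have : (fun s => ‖hh s x‖) = Set.indicator (Ico (min x 0) (max x 0)) (fun _ => (1:ℝ)) := by
    rw [show (fun s => ‖hh s x‖) = fun s => ‖(fun s => hh s x) s‖ from rfl, hh_eq]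
    funext s
    by_cases hs : s ∈ Ico (min x 0) (max x 0) <;>
      simp [Set.indicator_apply, hs] <;> split <;> norm_num
  rw [this, integral_indicator measurableSet_Ico, setIntegral_const, measureReal_def, Real.volume_Ico, smul_eq_mul,
    mul_one, ENNReal.toReal_ofReal (by simp [min_le_max] : (0:ℝ) ≤ max x 0 - min x 0)]
  rcases le_or_gt 0 x with hx | hx
  · rw [min_eq_right hx, max_eq_left hx, sub_zero, abs_of_nonneg hx]
  · rw [min_eq_left hx.le, max_eq_right hx.le, zero_sub, abs_of_neg hx]

lemma hh_norm (s x : ℝ) : ‖hh s x‖ ≤ 1 := by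
  unfold hh; split <;> split <;> norm_num

lemma hh_measurable : Measurable (fun z : ℝ × ℝ => hh z.1 z.2) := by
  unfold hh
  exact Measurable.sub
    (Measurable.ite (measurableSet_lt measurable_fst measurable_snd)
      measurable_const measurable_const)
    (Measurable.ite (measurableSet_lt measurable_fst measurable_const)
      measurable_const measurable_const)

noncomputable def gg (p q : ℝ × ℝ) : ℝ := hh p.1 q.1 * hh p.2 q.2

lemma gg_measurable : Measurable (fun z : (ℝ × ℝ) × (ℝ × ℝ) => gg z.2 z.1) := by
  unfold gg
  exact ((hh_measurable.comp ((measurable_fst.comp measurable_snd).prodMk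
      (measurable_fst.comp measurable_fst)))).mul
    ((hh_measurable.comp ((measurable_snd.comp measurable_snd).prodMk
      (measurable_snd.comp measurable_fst))))

lemma gg_integral_volume (q : ℝ × ℝ) : ∫ p : ℝ × ℝ, gg p q = q.1 * q.2 := by
  rw [Measure.volume_eq_prod]
  unfold gg
  rw [integral_prod_mul (f := fun s => hh s q.1) (g := fun t => hh t q.2),
    hh_integral, hh_integral]

lemma gg_integrable_volume (q : ℝ × ℝ) : Integrable (fun p : ℝ × ℝ => gg p q) volume := by
  rw [Measure.volume_eq_prod]
  unfold gg
  exact (hh_integrable q.1).mul_prod (hh_integrable q.2)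

lemma gg_norm_integral_volume (q : ℝ × ℝ) : ∫ p : ℝ × ℝ, ‖gg p q‖ = |q.1 * q.2| := by
  rw [Measure.volume_eq_prod]
  unfold gg
  simp_rw [norm_mul]
  rw [integral_prod_mul (f := fun s => ‖hh s q.1‖) (g := fun t => ‖hh t q.2‖),
    hh_norm_integral, hh_norm_integral, abs_mul]


section Fubini

variable {π : Measure (ℝ × ℝ)} [IsProbabilityMeasure π]

lemma gg_prod_integrable (hint : Integrable (fun q : ℝ × ℝ => q.1 * q.2) π) :
    Integrable (fun z : (ℝ × ℝ) × (ℝ × ℝ) => gg z.2 z.1) (π.prod volume) := by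
  rw [integrable_prod_iff gg_measurable.aestronglyMeasurable]
  constructor
  · exact Eventually.of_forall fun q => gg_integrable_volume q
  · have : (fun q : ℝ × ℝ => ∫ p : ℝ × ℝ, ‖gg p q‖) = fun q => |q.1 * q.2| := by
      funext q; exact gg_norm_integral_volume q
    rw [this]
    exact hint.abs

lemma gg_G_integrable (hint : Integrable (fun q : ℝ × ℝ => q.1 * q.2) π) :
    Integrable (fun p : ℝ × ℝ => ∫ q, gg p q ∂π) volume :=
  (gg_prod_integrable hint).integral_prod_right

lemma gg_swap (hint : Integrable (fun q : ℝ × ℝ => q.1 * q.2) π) :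
    ∫ q : ℝ × ℝ, q.1 * q.2 ∂π = ∫ p : ℝ × ℝ, ∫ q, gg p q ∂π := by
  have h := integral_integral_swap (f := fun q p => gg p q) (gg_prod_integrable hint)
  simp_rw [gg_integral_volume] at h
  exact h

end Fubini

lemma gg_decomp {π : Measure (ℝ × ℝ)} [IsProbabilityMeasure π] {μ ν : Measure ℝ}
    (hfst : π.fst = μ) (hsnd : π.snd = ν) (p : ℝ × ℝ) :
    ∫ q, gg p q ∂π = (π (Ioi p.1 ×ˢ Ioi p.2)).toReal
      - (if p.1 < 0 then (ν (Ioi p.2)).toReal else 0)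
      - (if p.2 < 0 then (μ (Ioi p.1)).toReal else 0)
      + (if p.1 < 0 then (1:ℝ) else 0) * (if p.2 < 0 then 1 else 0) := by
  have hm1 : MeasurableSet (Ioi p.1 ×ˢ Ioi p.2 : Set (ℝ × ℝ)) :=
    (measurableSet_Ioi.prod measurableSet_Ioi)
  have hm2 : MeasurableSet (Prod.fst ⁻¹' Ioi p.1 : Set (ℝ × ℝ)) :=
    measurable_fst measurableSet_Ioi
  have hm3 : MeasurableSet (Prod.snd ⁻¹' Ioi p.2 : Set (ℝ × ℝ)) :=
    measurable_snd measurableSet_Ioi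
  have hfun : (fun q : ℝ × ℝ => gg p q) =
      fun q => ((Ioi p.1 ×ˢ Ioi p.2).indicator (fun _ => (1:ℝ)) q
        - (if p.1 < 0 then (1:ℝ) else 0) * (Prod.snd ⁻¹' Ioi p.2).indicator (fun _ => (1:ℝ)) q)
        - ((if p.2 < 0 then (1:ℝ) else 0) * (Prod.fst ⁻¹' Ioi p.1).indicator (fun _ => (1:ℝ)) q
        - (if p.1 < 0 then (1:ℝ) else 0) * (if p.2 < 0 then 1 else 0)) := by
    funext q
    unfold gg hh
    simp only [Set.indicator_apply, mem_prod, mem_Ioi, mem_preimage]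
    by_cases h1 : p.1 < q.1 <;> by_cases h2 : p.2 < q.2 <;>
      by_cases h3 : p.1 < 0 <;> by_cases h4 : p.2 < 0 <;>
      simp [h1, h2, h3, h4] <;> ring
  have hi1 : Integrable ((Ioi p.1 ×ˢ Ioi p.2).indicator (fun _ => (1:ℝ))) π :=
    (integrable_const (1:ℝ)).indicator hm1
  have hi2 : Integrable (fun q => (if p.1 < 0 then (1:ℝ) else 0)
      * (Prod.snd ⁻¹' Ioi p.2).indicator (fun _ => (1:ℝ)) q) π :=
    ((integrable_const (1:ℝ)).indicator hm3).const_mul _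
  have hi3 : Integrable (fun q => (if p.2 < 0 then (1:ℝ) else 0)
      * (Prod.fst ⁻¹' Ioi p.1).indicator (fun _ => (1:ℝ)) q) π :=
    ((integrable_const (1:ℝ)).indicator hm2).const_mul _
  have hi4 : Integrable (fun _ : ℝ × ℝ => (if p.1 < 0 then (1:ℝ) else 0)
      * (if p.2 < 0 then (1:ℝ) else 0)) π := integrable_const _
  have j1 : ∫ q : ℝ × ℝ, (Ioi p.1 ×ˢ Ioi p.2).indicator (fun _ => (1:ℝ)) q ∂π
      = (π (Ioi p.1 ×ˢ Ioi p.2)).toReal := integral_indicator_one hm1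
  have j2 : ∫ q : ℝ × ℝ, (Prod.fst ⁻¹' Ioi p.1).indicator (fun _ => (1:ℝ)) q ∂π
      = (π (Prod.fst ⁻¹' Ioi p.1)).toReal := integral_indicator_one hm2
  have j3 : ∫ q : ℝ × ℝ, (Prod.snd ⁻¹' Ioi p.2).indicator (fun _ => (1:ℝ)) q ∂π
      = (π (Prod.snd ⁻¹' Ioi p.2)).toReal := integral_indicator_one hm3
  have hA : Integrable (fun q : ℝ × ℝ => (Ioi p.1 ×ˢ Ioi p.2).indicator (fun _ => (1:ℝ)) q
      - (if p.1 < 0 then (1:ℝ) else 0) * (Prod.snd ⁻¹' Ioi p.2).indicator (fun _ => (1:ℝ)) q) π :=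
    hi1.sub hi2
  have hB : Integrable (fun q : ℝ × ℝ =>
      (if p.2 < 0 then (1:ℝ) else 0) * (Prod.fst ⁻¹' Ioi p.1).indicator (fun _ => (1:ℝ)) q
      - (if p.1 < 0 then (1:ℝ) else 0) * (if p.2 < 0 then 1 else 0)) π := hi3.sub hi4
  rw [hfun, integral_sub hA hB, integral_sub hi1 hi2, integral_sub hi3 hi4, integral_const,
    integral_const_mul, integral_const_mul, j1, j2, j3]
  have e1 : π (Prod.fst ⁻¹' Ioi p.1) = μ (Ioi p.1) := by
    rw [← hfst, Measure.fst_apply measurableSet_Ioi]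
  have e2 : π (Prod.snd ⁻¹' Ioi p.2) = ν (Ioi p.2) := by
    rw [← hsnd, Measure.snd_apply measurableSet_Ioi]
  rw [e1, e2]
  simp only [probReal_univ, measure_univ, ENNReal.toReal_one, smul_eq_mul, one_smul]
  by_cases h3 : p.1 < 0 <;> by_cases h4 : p.2 < 0 <;> simp [h3, h4] <;> ring

lemma integral_mul_le_of_survival_le {π π' : Measure (ℝ × ℝ)}
    [IsProbabilityMeasure π] [IsProbabilityMeasure π'] {μ ν : Measure ℝ}
    (hfst : π.fst = μ) (hsnd : π.snd = ν) (hfst' : π'.fst = μ) (hsnd' : π'.snd = ν)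
    (hint : Integrable (fun q : ℝ × ℝ => q.1 * q.2) π)
    (hint' : Integrable (fun q : ℝ × ℝ => q.1 * q.2) π')
    (hK : ∀ p : ℝ × ℝ, π (Ioi p.1 ×ˢ Ioi p.2) ≤ π' (Ioi p.1 ×ˢ Ioi p.2)) :
    ∫ q : ℝ × ℝ, q.1 * q.2 ∂π ≤ ∫ q : ℝ × ℝ, q.1 * q.2 ∂π' := by
  rw [gg_swap hint, gg_swap hint']
  rw [← sub_nonneg, ← integral_sub (gg_G_integrable hint') (gg_G_integrable hint)]
  refine integral_nonneg fun p => ?_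
  rw [gg_decomp hfst hsnd p, gg_decomp hfst' hsnd' p]
  have h1 : ((π (Ioi p.1 ×ˢ Ioi p.2)).toReal ≤ (π' (Ioi p.1 ×ˢ Ioi p.2)).toReal) :=
    ENNReal.toReal_mono (measure_ne_top _ _) (hK p)
  simp only [Pi.zero_apply]
  linarith

section Coup

variable (μ ν : Measure ℝ) [IsProbabilityMeasure μ] [IsProbabilityMeasure ν]

lemma qf_lt_iff {t x : ℝ} (ht : t ∈ Ioo (0:ℝ) 1) : x < qf μ t ↔ cdf μ x < t := by
  rw [← not_le, ← not_le, qf_le_iff μ ht.1 ht.2]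

lemma meas_Ioi (x : ℝ) : μ (Ioi x) = ENNReal.ofReal (1 - cdf μ x) := by
  rw [← compl_Iic, measure_compl measurableSet_Iic (measure_ne_top μ _), measure_univ,
    ← ofReal_cdf μ x, ← ENNReal.ofReal_one, ← ENNReal.ofReal_sub _ (cdf_nonneg μ x)]

noncomputable def coup : Measure (ℝ × ℝ) :=
  Measure.map (fun u => (qf μ u, qf ν u)) (volume.restrict (Ioo 0 1))

lemma restrict_prob : IsProbabilityMeasure (volume.restrict (Ioo (0:ℝ) 1)) := by
  constructor; simp

lemma pair_aemeasurable :
    AEMeasurable (fun u => (qf μ u, qf ν u)) (volume.restrict (Ioo (0:ℝ) 1)) :=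
  (qf_aemeasurable μ).prodMk (qf_aemeasurable ν)

lemma coup_prob : IsProbabilityMeasure (coup μ ν) := by
  have := restrict_prob
  exact Measure.isProbabilityMeasure_map (pair_aemeasurable μ ν)

lemma coup_fst : (coup μ ν).fst = μ := by
  rw [Measure.fst, coup,
    AEMeasurable.map_map_of_aemeasurable measurable_fst.aemeasurable (pair_aemeasurable μ ν)]
  exact qf_map_eq μ

lemma coup_snd : (coup μ ν).snd = ν := by
  rw [Measure.snd, coup,
    AEMeasurable.map_map_of_aemeasurable measurable_snd.aemeasurable (pair_aemeasurable μ ν)]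
  exact qf_map_eq ν

lemma coup_survival (s t : ℝ) :
    coup μ ν (Ioi s ×ˢ Ioi t) = min (μ (Ioi s)) (ν (Ioi t)) := by
  rw [coup, Measure.map_apply_of_aemeasurable (pair_aemeasurable μ ν)
    (measurableSet_Ioi.prod measurableSet_Ioi),
    Measure.restrict_apply₀' measurableSet_Ioo.nullMeasurableSet]
  have hset : (fun u => (qf μ u, qf ν u)) ⁻¹' (Ioi s ×ˢ Ioi t) ∩ Ioo 0 1
      = Ioo (max (cdf μ s) (cdf ν t)) 1 := by
    ext u
    simp only [mem_inter_iff, mem_preimage, mem_prod, mem_Ioi, mem_Ioo, max_lt_iff]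
    constructor
    · rintro ⟨⟨h1, h2⟩, hu⟩
      exact ⟨⟨(qf_lt_iff μ hu).mp h1, (qf_lt_iff ν hu).mp h2⟩, hu.2⟩
    · rintro ⟨⟨h1, h2⟩, hu1⟩
      have hu : u ∈ Ioo (0:ℝ) 1 := ⟨lt_of_le_of_lt (cdf_nonneg μ s) h1, hu1⟩
      exact ⟨⟨(qf_lt_iff μ hu).mpr h1, (qf_lt_iff ν hu).mpr h2⟩, hu⟩
  rw [hset, Real.volume_Ioo, meas_Ioi μ s, meas_Ioi ν t]
  have hmin : 1 - max (cdf μ s) (cdf ν t) = min (1 - cdf μ s) (1 - cdf ν t) := by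
    rcases le_total (cdf μ s) (cdf ν t) with h | h
    · rw [max_eq_right h, min_eq_right (by linarith)]
    · rw [max_eq_left h, min_eq_left (by linarith)]
  rw [hmin]
  exact Monotone.map_min (fun a b hab => ENNReal.ofReal_le_ofReal hab)

lemma survival_le (π : Measure (ℝ × ℝ)) (hfst : π.fst = μ) (hsnd : π.snd = ν) (s t : ℝ) :
    π (Ioi s ×ˢ Ioi t) ≤ min (μ (Ioi s)) (ν (Ioi t)) := by
  refine le_min ?_ ?_
  · rw [← hfst, Measure.fst_apply measurableSet_Ioi]
    exact measure_mono (prod_subset_preimage_fst _ _)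
  · rw [← hsnd, Measure.snd_apply measurableSet_Ioi]
    exact measure_mono (prod_subset_preimage_snd _ _)

end Coup

section Moments

variable (μ ν : Measure ℝ) [IsProbabilityMeasure μ] [IsProbabilityMeasure ν]

lemma qf_memℒp (hμ2 : Integrable (fun x => x ^ 2) μ) :
    MemLp (qf μ) 2 (volume.restrict (Ioo (0:ℝ) 1)) := by
  have hid : MemLp (fun x : ℝ => x) 2 μ :=
    (memLp_two_iff_integrable_sq aestronglyMeasurable_id).mpr hμ2
  rw [← qf_map_eq μ] at hid
  exact (memLp_map_measure_iff aestronglyMeasurable_id (qf_aemeasurable μ)).mp hid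

lemma qf_integral : ∫ u in Ioo (0:ℝ) 1, qf μ u = ∫ x, x ∂μ := by
  conv_rhs => rw [← qf_map_eq μ]
  exact (integral_map (qf_aemeasurable μ) measurable_id.aestronglyMeasurable).symm

lemma qf_mul_integrable (hμ2 : Integrable (fun x => x ^ 2) μ)
    (hν2 : Integrable (fun y => y ^ 2) ν) :
    Integrable (fun u => qf μ u * qf ν u) (volume.restrict (Ioo (0:ℝ) 1)) := by
  have h1 := qf_memℒp μ hμ2
  have h2 := qf_memℒp ν hν2
  have h3 : MemLp (qf μ • qf ν) 1 (volume.restrict (Ioo (0:ℝ) 1)) :=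
    h2.smul h1 (hpqr := ⟨by
      rw [inv_one, ENNReal.inv_two_add_inv_two]⟩)
  have h4 := memLp_one_iff_integrable.mp h3
  exact h4.congr (Eventually.of_forall fun u => rfl)

lemma coup_mul_integrable (hμ2 : Integrable (fun x => x ^ 2) μ)
    (hν2 : Integrable (fun y => y ^ 2) ν) :
    Integrable (fun q : ℝ × ℝ => q.1 * q.2) (coup μ ν) := by
  rw [coup, integrable_map_measure (g := fun q : ℝ × ℝ => q.1 * q.2)
    (measurable_fst.mul measurable_snd).aestronglyMeasurable (pair_aemeasurable μ ν)]
  exact qf_mul_integrable μ ν hμ2 hν2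

lemma coup_mul_integral :
    ∫ q : ℝ × ℝ, q.1 * q.2 ∂(coup μ ν) = ∫ u in Ioo (0:ℝ) 1, qf μ u * qf ν u := by
  rw [coup, integral_map (f := fun q : ℝ × ℝ => q.1 * q.2) (pair_aemeasurable μ ν)
    (measurable_fst.mul measurable_snd).aestronglyMeasurable]

end Moments

/-- Sharp upper bound on the slope with one regressor: the supremum over couplings of
`Cov(X̃,Ỹ)/Var(X̃)` equals `E[(F_{X_o}⁻¹(U) − E[X_o]) F_Y⁻¹(U)] / Var(X_o)`, and it is
attained. -/
theorem stmt_9 (μ ν : Measure ℝ) [IsProbabilityMeasure μ] [IsProbabilityMeasure ν]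
    (hμ2 : Integrable (fun x => x ^ 2) μ) (hν2 : Integrable (fun y => y ^ 2) ν)
    (hvar : 0 < (∫ x, x ^ 2 ∂μ) - (∫ x, x ∂μ) ^ 2) :
    IsGreatest {s : ℝ | ∃ π : Measure (ℝ × ℝ), π.fst = μ ∧ π.snd = ν ∧
        Integrable (fun q => q.1 * q.2) π ∧
        s = ((∫ q, q.1 * q.2 ∂π) - (∫ x, x ∂μ) * (∫ y, y ∂ν))
              / ((∫ x, x ^ 2 ∂μ) - (∫ x, x ∂μ) ^ 2)}
      ((∫ t in Set.Ioc (0:ℝ) 1, (qf μ t - ∫ x, x ∂μ) * qf ν t)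
          / ((∫ x, x ^ 2 ∂μ) - (∫ x, x ∂μ) ^ 2)) := by
  set m := ∫ x, x ∂μ with hm
  set my := ∫ y, y ∂ν with hmy
  have hνint : Integrable (qf ν) (volume.restrict (Ioo (0:ℝ) 1)) :=
    (qf_memℒp ν hν2).integrable one_le_two
  have hNum : (∫ t in Set.Ioc (0:ℝ) 1, (qf μ t - m) * qf ν t)
      = (∫ q : ℝ × ℝ, q.1 * q.2 ∂(coup μ ν)) - m * my := by
    rw [integral_Ioc_eq_integral_Ioo]
    have : (fun t => (qf μ t - m) * qf ν t)
        = fun t => qf μ t * qf ν t - m * qf ν t := by funext t; ring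
    rw [this, integral_sub (qf_mul_integrable μ ν hμ2 hν2) (hνint.const_mul m),
      integral_const_mul, qf_integral ν, coup_mul_integral]
  haveI := coup_prob μ ν
  constructor
  · refine ⟨coup μ ν, coup_fst μ ν, coup_snd μ ν, coup_mul_integrable μ ν hμ2 hν2, ?_⟩
    rw [hNum]
  · rintro s ⟨π, hfst, hsnd, hint, rfl⟩
    haveI : IsProbabilityMeasure π := by
      constructor
      rw [← Measure.fst_univ, hfst]
      exact measure_univ
    have hle : ∫ q : ℝ × ℝ, q.1 * q.2 ∂π ≤ ∫ q : ℝ × ℝ, q.1 * q.2 ∂(coup μ ν) :=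
      integral_mul_le_of_survival_le hfst hsnd (coup_fst μ ν) (coup_snd μ ν) hint
        (coup_mul_integrable μ ν hμ2 hν2)
        (fun p => (survival_le μ ν π hfst hsnd p.1 p.2).trans_eq
          (coup_survival μ ν p.1 p.2).symm)
    rw [hNum]
    have h2 := sub_le_sub_right hle (m * my)
    exact div_le_div_of_nonneg_right h2 hvar.le
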